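/- For every τ > 0 and every x ∈ ℝ, the Gaussian scale mixture identity for the Laplacian holds: ∫₀^∞ (2πs)^{−1/2} exp(−x²/(2s)) · (τ²/2) exp(−τ² s / 2) ds = (τ/2) exp(−τ|x|). -/

import Mathlib

open MeasureTheory Real

section AuxGlasser
open Set

lemma odd_gauss_zero (a : ℝ) (ha : 0 < a) :
    ∫ u : ℝ, (u / Real.sqrt (u ^ 2 + 4 * a)) * Real.exp (-u ^ 2) = 0 := by
  set f : ℝ → ℝ := fun u => (u / Real.sqrt (u ^ 2 + 4 * a)) * Real.exp (-u ^ 2) with hf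
  have hodd : ∀ u, f (-u) = - f u := by
    intro u
    simp only [f]
    rw [neg_pow, neg_pow]
    ring_nf
  have h1 : ∫ u : ℝ, f (-u) = ∫ u : ℝ, f u := integral_neg_eq_self f volume
  have h2 : ∫ u : ℝ, f (-u) = - ∫ u : ℝ, f u := by
    simp_rw [hodd]; exact integral_neg f
  linarith [h1, h2]

lemma glasser (a : ℝ) (ha : 0 < a) :
    ∫ t in Ioi (0:ℝ), Real.exp (-(t - a / t) ^ 2) = Real.sqrt π / 2 := by
  set r : ℝ → ℝ := fun u => Real.sqrt (u ^ 2 + 4 * a) with hr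
  set g : ℝ → ℝ := fun u => (u + r u) / 2 with hg
  have hpos : ∀ u : ℝ, 0 < u ^ 2 + 4 * a := fun u => by positivity
  have hrpos : ∀ u : ℝ, 0 < r u := fun u => Real.sqrt_pos.2 (hpos u)
  have hrgt : ∀ u : ℝ, |u| < r u := by
    intro u
    have : |u| = Real.sqrt (u ^ 2) := (Real.sqrt_sq_eq_abs u).symm
    rw [this, hr]
    exact Real.sqrt_lt_sqrt (sq_nonneg u) (by linarith)
  have hgpos : ∀ u : ℝ, 0 < g u := by
    intro u
    have := hrgt u
    have := neg_abs_le u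
    simp only [hg]
    linarith
  have hderiv : ∀ u : ℝ, HasDerivAt g ((1 + u / r u) / 2) u := by
    intro u
    have h1 : HasDerivAt (fun u : ℝ => u ^ 2 + 4 * a) (2 * u) u := by
      simpa using ((hasDerivAt_pow 2 u).add_const (4 * a))
    have h2 : HasDerivAt r (1 / (2 * r u) * (2 * u)) u :=
      (Real.hasDerivAt_sqrt (hpos u).ne').comp u h1
    have h3 : HasDerivAt (fun u => u + r u) (1 + 1 / (2 * r u) * (2 * u)) u :=
      (hasDerivAt_id u).add h2
    have h4 := h3.div_const 2
    refine h4.congr_deriv ?_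
    ring
  have hderivpos : ∀ u : ℝ, 0 < (1 + u / r u) / 2 := by
    intro u
    have h1 : -(1:ℝ) < u / r u := by
      rw [lt_div_iff₀ (hrpos u)]
      have := hrgt u; have := neg_abs_le u
      linarith
    linarith
  have hmono : StrictMono g := by
    apply strictMono_of_deriv_pos
    intro u
    rw [(hderiv u).deriv]
    exact hderivpos u
  have himg : g '' univ = Ioi (0:ℝ) := by
    apply Subset.antisymm
    · rintro _ ⟨u, -, rfl⟩; exact hgpos u
    · rintro t ht
      refine ⟨t - a / t, mem_univ _, ?_⟩
      have ht' : (0:ℝ) < t := ht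
      have hrval : r (t - a / t) = t + a / t := by
        show Real.sqrt ((t - a / t) ^ 2 + 4 * a) = t + a / t
        have : (t - a / t) ^ 2 + 4 * a = (t + a / t) ^ 2 := by
          field_simp; ring
        rw [this]
        exact Real.sqrt_sq (by positivity)
      simp only [hg, hrval]; ring
  have key : ∫ t in Ioi (0:ℝ), Real.exp (-(t - a / t) ^ 2)
      = ∫ u : ℝ, |(1 + u / r u) / 2| • Real.exp (-(g u - a / g u) ^ 2) := by
    rw [← himg]
    rw [show (∫ u : ℝ, |(1 + u / r u) / 2| • Real.exp (-(g u - a / g u) ^ 2))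
        = ∫ u in univ, |(1 + u / r u) / 2| • Real.exp (-(g u - a / g u) ^ 2) by
      rw [setIntegral_univ]]
    exact integral_image_eq_integral_abs_deriv_smul MeasurableSet.univ
      (fun u _ => (hderiv u).hasDerivWithinAt) (hmono.injective.injOn)
      (fun t => Real.exp (-(t - a / t) ^ 2))
  have hgu : ∀ u : ℝ, g u - a / g u = u := by
    intro u
    have h0 : (g u) ^ 2 = u * g u + a := by
      have : (u + r u) ^ 2 = u ^ 2 + 2 * u * r u + (u ^ 2 + 4 * a) := by
        have := Real.sq_sqrt (hpos u).le
        simp only [hr] at *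
        nlinarith [this]
      simp only [hg]
      nlinarith [this]
    have hne := (hgpos u).ne'
    field_simp
    nlinarith [h0]
  rw [key]
  have : ∀ u : ℝ, |(1 + u / r u) / 2| • Real.exp (-(g u - a / g u) ^ 2)
      = (1 / 2) * Real.exp (-u ^ 2) + (1 / 2) * ((u / r u) * Real.exp (-u ^ 2)) := by
    intro u
    rw [hgu u, abs_of_pos (hderivpos u), smul_eq_mul]
    ring
  simp_rw [this]
  have hint1 : Integrable (fun u : ℝ => (1 / 2) * Real.exp (-u ^ 2)) := by
    have := integrable_exp_neg_mul_sq (one_pos)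
    simpa using this.const_mul (1/2 : ℝ)
  have hint0 : Integrable (fun u : ℝ => (u / r u) * Real.exp (-u ^ 2)) := by
    have hmeas : AEStronglyMeasurable (fun u : ℝ => (u / r u) * Real.exp (-u ^ 2)) volume := by
      apply Continuous.aestronglyMeasurable
      exact ((continuous_id.div (by continuity) (fun u => (hrpos u).ne')).mul
        (by continuity))
    have hbd : ∀ u : ℝ, ‖(u / r u) * Real.exp (-u ^ 2)‖ ≤ ‖Real.exp (-(1:ℝ) * u ^ 2)‖ := by
      intro u
      simp only [norm_mul, Real.norm_eq_abs, Real.abs_exp, neg_one_mul]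
      have h1 : |u / r u| ≤ 1 := by
        rw [abs_div, abs_of_pos (hrpos u), div_le_one (hrpos u)]
        exact (hrgt u).le
      nlinarith [Real.exp_pos (-u ^ 2), h1, abs_nonneg (u / r u)]
    exact (integrable_exp_neg_mul_sq one_pos).mono hmeas (Filter.Eventually.of_forall hbd)
  rw [integral_add hint1 (hint0.const_mul _), integral_const_mul, integral_const_mul,
    odd_gauss_zero a ha]
  have : ∫ u : ℝ, Real.exp (-u ^ 2) = Real.sqrt π := by
    have := integral_gaussian (1:ℝ)
    simpa using this
  rw [this]; ring

lemma glasser' (a : ℝ) (ha : 0 ≤ a) :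
    ∫ t in Ioi (0:ℝ), Real.exp (-(t - a / t) ^ 2) = Real.sqrt π / 2 := by
  rcases eq_or_lt_of_le ha with h | h
  · subst h
    simp only [zero_div, sub_zero]
    have := integral_gaussian_Ioi (1:ℝ)
    simpa using this
  · exact glasser a h

end AuxGlasser

/-- Gaussian scale mixture identity for the Laplacian density:
`∫₀^∞ (2πs)^{-1/2} exp(-x²/(2s)) · (τ²/2) exp(-τ²s/2) ds = (τ/2) exp(-τ|x|)`. -/
theorem laplacian_gauss_scale_mixture (τ x : ℝ) (hτ : 0 < τ) :
    ∫ s in Set.Ioi (0 : ℝ),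
        (1 / Real.sqrt (2 * Real.pi * s)) * Real.exp (-x ^ 2 / (2 * s)) *
          (τ ^ 2 / 2 * Real.exp (-τ ^ 2 * s / 2)) =
      τ / 2 * Real.exp (-τ * |x|) := by
  set A : ℝ := τ / Real.sqrt 2 with hA
  set B : ℝ := |x| / Real.sqrt 2 with hB
  have h2 : (0:ℝ) < Real.sqrt 2 := by positivity
  have hApos : 0 < A := by positivity
  have hsq2 : Real.sqrt 2 ^ 2 = 2 := Real.sq_sqrt (by norm_num)
  -- Step 1: substitute s = t^2
  have step1 : ∫ s in Set.Ioi (0 : ℝ),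
        (1 / Real.sqrt (2 * Real.pi * s)) * Real.exp (-x ^ 2 / (2 * s)) *
          (τ ^ 2 / 2 * Real.exp (-τ ^ 2 * s / 2))
      = ∫ t in Set.Ioi (0:ℝ), (2 * t ^ ((2:ℝ) - 1)) •
        ((1 / Real.sqrt (2 * Real.pi * t ^ (2:ℝ))) * Real.exp (-x ^ 2 / (2 * t ^ (2:ℝ))) *
          (τ ^ 2 / 2 * Real.exp (-τ ^ 2 * t ^ (2:ℝ) / 2))) :=
    (integral_comp_rpow_Ioi_of_pos (by norm_num : (0:ℝ) < 2)).symm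
  rw [step1]
  -- rewrite integrand on Ioi 0
  have congr1 : ∫ t in Set.Ioi (0:ℝ), (2 * t ^ ((2:ℝ) - 1)) •
        ((1 / Real.sqrt (2 * Real.pi * t ^ (2:ℝ))) * Real.exp (-x ^ 2 / (2 * t ^ (2:ℝ))) *
          (τ ^ 2 / 2 * Real.exp (-τ ^ 2 * t ^ (2:ℝ) / 2)))
      = ∫ t in Set.Ioi (0:ℝ),
          (τ ^ 2 / Real.sqrt (2 * Real.pi) * Real.exp (-τ * |x|)) *
            Real.exp (-(A * t - B / t) ^ 2) := by
    apply setIntegral_congr_fun measurableSet_Ioi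
    intro t ht
    have ht' : (0:ℝ) < t := ht
    have hrp : t ^ (2:ℝ) = t ^ 2 := by
      rw [show (2:ℝ) = ((2:ℕ):ℝ) by norm_num, Real.rpow_natCast]
    have hrp1 : t ^ ((2:ℝ) - 1) = t := by
      norm_num
    dsimp only
    rw [hrp, hrp1, smul_eq_mul]
    have hsqrt : Real.sqrt (2 * Real.pi * t ^ 2) = Real.sqrt (2 * Real.pi) * t := by
      rw [Real.sqrt_mul (by positivity), Real.sqrt_sq ht'.le]
    rw [hsqrt]
    have hexp : Real.exp (-x ^ 2 / (2 * t ^ 2)) * Real.exp (-τ ^ 2 * t ^ 2 / 2)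
        = Real.exp (-τ * |x|) * Real.exp (-(A * t - B / t) ^ 2) := by
      rw [← Real.exp_add, ← Real.exp_add]
      congr 1
      have hxsq : |x| ^ 2 = x ^ 2 := sq_abs x
      have hAB : A * B = τ * |x| / 2 := by
        rw [hA, hB]
        rw [div_mul_div_comm, Real.mul_self_sqrt (by norm_num : (0:ℝ) ≤ 2)]
      have hexpand : (A * t - B / t) ^ 2
          = A ^ 2 * t ^ 2 + B ^ 2 / t ^ 2 - 2 * (A * B) := by
        field_simp
        ring
      have hA2 : A ^ 2 = τ ^ 2 / 2 := by
        rw [hA, div_pow, hsq2]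
      have hB2 : B ^ 2 = x ^ 2 / 2 := by
        rw [hB, div_pow, hsq2, hxsq]
      rw [hexpand, hA2, hB2, hAB]
      field_simp
      ring
    have key : 2 * t * (1 / (Real.sqrt (2 * Real.pi) * t) * Real.exp (-x ^ 2 / (2 * t ^ 2)) *
          (τ ^ 2 / 2 * Real.exp (-τ ^ 2 * t ^ 2 / 2)))
        = (τ ^ 2 / Real.sqrt (2 * Real.pi)) *
            (Real.exp (-x ^ 2 / (2 * t ^ 2)) * Real.exp (-τ ^ 2 * t ^ 2 / 2)) := by
      have hπ : (0:ℝ) < Real.sqrt (2 * Real.pi) := by positivity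
      field_simp
    rw [key, hexp]
    ring
  rw [congr1, integral_const_mul]
  -- Step 2: the Glasser integral
  have step2 : ∫ t in Set.Ioi (0:ℝ), Real.exp (-(A * t - B / t) ^ 2)
      = A⁻¹ * (Real.sqrt π / 2) := by
    have hcongr : ∀ t ∈ Set.Ioi (0:ℝ), Real.exp (-(A * t - B / t) ^ 2)
        = (fun u => Real.exp (-(u - (A * B) / u) ^ 2)) (A * t) := by
      intro t ht
      have ht' : (0:ℝ) < t := ht
      dsimp only
      congr 2
      rw [mul_div_mul_left _ _ hApos.ne']
    rw [setIntegral_congr_fun measurableSet_Ioi hcongr,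
      integral_comp_mul_left_Ioi (fun u => Real.exp (-(u - (A * B) / u) ^ 2)) 0 hApos,
      mul_zero, glasser' (A * B) (by positivity), smul_eq_mul]
  rw [step2]
  -- final arithmetic
  have hπ2 : Real.sqrt (2 * Real.pi) = Real.sqrt 2 * Real.sqrt π :=
    Real.sqrt_mul (by norm_num) _
  rw [hA, hπ2]
  have hπpos : (0:ℝ) < Real.sqrt π := Real.sqrt_pos.2 Real.pi_pos
  field_simp
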